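/- arXiv:1705.05484 — 2 statements merged into one kernel-verified Lean document; each statement's English description precedes it below -/
import Mathlib

section
/- For a downward closed subset B of D^{<ℕ}, Player I has a winning strategy in the B game if and only if B is big. -/
variable {D : Type*} [Preorder D] [IsDirected D (· ≤ ·)] [Nonempty D]

/-- A subset of a directed set is cofinal if every element has an upper bound in it. -/
def Cofinal (S : Set D) : Prop := ∀ u : D, ∃ v ∈ S, u ≤ v

/-- A subset is eventual if its complement is not cofinal. -/
def Eventual (S : Set D) : Prop := ¬ Cofinal Sᶜ

/-- Inevitable subsets of the tree of nonempty finite sequences from `D`. -/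
def Inevitable (B : Set (List D)) : Prop :=
  Eventual {u : D | [u] ∈ B} ∧
    ∀ t ∈ B, t ≠ [] → Eventual {u : D | t ++ [u] ∈ B}

/-- A set of finite sequences is big if it contains an inevitable subset. -/
def Big (B : Set (List D)) : Prop := ∃ B' : Set (List D), B' ⊆ B ∧ Inevitable B'

/-- `B` is downward closed if it contains the nonempty initial segments of its members. -/
def DownwardClosed (B : Set (List D)) : Prop :=
  ∀ s t : List D, s ≠ [] → s <+: t → t ∈ B → s ∈ B

/-- The finite sequence of the first `n` values of `v`. -/
def pfx (v : ℕ → D) (n : ℕ) : List D := List.ofFn fun i : Fin n => v i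

/-- A strategy for Player I is a function from finite sequences of Player II's
previous moves to `D`. The sequence `(v_i)` of Player II's moves is `φ`-admissible up
to `n` if `φ` applied to each proper initial segment of length `j < n` is `≤ v_{j+1}`. -/
def IAdmissible (φ : List D → D) (v : ℕ → D) (n : ℕ) : Prop :=
  ∀ j : ℕ, j < n → φ (pfx v j) ≤ v j

/-- `φ` is a winning strategy for Player I in the `B` game if every infinite
`φ`-admissible sequence of moves of Player II has all of its nonempty initial
segments in `B`. -/
def IWinning (φ : List D → D) (B : Set (List D)) : Prop :=
  ∀ v : ℕ → D, (∀ j : ℕ, φ (pfx v j) ≤ v j) → ∀ n : ℕ, pfx v (n + 1) ∈ B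

/-- The shifted game: positions `s` with `t ++ s ∈ B`. -/
def shiftGame (B : Set (List D)) (t : List D) : Set (List D) := {s | t ++ s ∈ B}

/-- Player II has a winning strategy in the `B` game: a function `ψ` assigning to each
finite record of previous pairs of moves and each Player I move `u` a response
`v ≥ u`, such that every play according to `ψ` has some nonempty initial segment
outside `B`. -/
def IIHasWinning (B : Set (List D)) : Prop :=
  ∃ ψ : List (D × D) → D → D, (∀ l u, u ≤ ψ l u) ∧
    ∀ u v : ℕ → D,
      (∀ n : ℕ, v n = ψ (List.ofFn fun i : Fin n => (u i, v i)) (u n)) →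
      ∃ n : ℕ, pfx v (n + 1) ∉ B

/-- `φ` is a defensive strategy for Player I in the `B` game if at every position
reachable by a `φ`-admissible sequence of Player II moves, Player II has no winning
strategy in the corresponding shifted game. -/
def IDefensive (φ : List D → D) (B : Set (List D)) : Prop :=
  ∀ (v : ℕ → D) (n : ℕ), IAdmissible φ v n → ¬ IIHasWinning (shiftGame B (pfx v n))

section Aux
variable {D : Type*} [Preorder D] [IsDirected D (· ≤ ·)] [Nonempty D]

lemma eventual_iff' {S : Set D} : Eventual S ↔ ∃ u : D, ∀ v : D, u ≤ v → v ∈ S := by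
  unfold Eventual Cofinal
  push_neg
  constructor
  · rintro ⟨u, hu⟩
    exact ⟨u, fun v hv => by_contra fun hc => hu v hc hv⟩
  · rintro ⟨u, hu⟩
    exact ⟨u, fun v hv hle => hv (hu v hle)⟩

/-- Repeatedly extend a position by Player I's strategy move. -/
def playL (φ : List D → D) (t : List D) : ℕ → List D
  | 0 => t
  | k + 1 => playL φ t k ++ [φ (playL φ t k)]

lemma playL_length (φ : List D → D) (t : List D) (k : ℕ) :
    (playL φ t k).length = t.length + k := by
  induction k with
  | zero => rfl
  | succ k ih => simp [playL, ih]; omega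

lemma playL_prefix (φ : List D → D) (t : List D) {k m : ℕ} (h : k ≤ m) :
    playL φ t k <+: playL φ t m := by
  induction m with
  | zero => simpa [Nat.le_zero.mp h]
  | succ m ih =>
    rcases Nat.lt_or_ge k (m+1) with h' | h'
    · exact (ih (by omega)).trans ⟨[φ (playL φ t m)], rfl⟩
    · have : k = m + 1 := by omega
      simp [this]

lemma pfx_succ (v : ℕ → D) (n : ℕ) : pfx v (n + 1) = pfx v n ++ [v n] := by
  unfold pfx
  rw [List.ofFn_succ']
  simp

lemma pfx_length (v : ℕ → D) (n : ℕ) : (pfx v n).length = n := by simp [pfx]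

theorem winning_iff_big' (B : Set (List D)) :
    (∃ φ : List D → D, IWinning φ B) ↔ Big B := by
  constructor
  · rintro ⟨φ, hφ⟩
    classical
    set B' : Set (List D) :=
      {t | t ≠ [] ∧ ∀ j (h : j < t.length), φ (t.take j) ≤ t[j]} with hB'
    refine ⟨B', ?_, ?_, ?_⟩
    · -- B' ⊆ B
      rintro t ⟨hne, hadm⟩
      have hlen : ∀ k, (playL φ t k).length = t.length + k := playL_length φ t
      set v : ℕ → D := fun j => (playL φ t (j+1))[j]'(by rw [hlen]; omega) with hv
      have hget : ∀ (m j : ℕ) (h : j < (playL φ t m).length), v j = (playL φ t m)[j] := by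
        intro m j h
        rcases Nat.le_total (j+1) m with hm | hm
        · exact (playL_prefix φ t hm).getElem (by rw [hlen]; omega)
        · exact ((playL_prefix φ t hm).getElem h).symm
      have hpfx : ∀ n, pfx v n = (playL φ t n).take n := by
        intro n
        apply List.ext_getElem
        · simp [pfx, hlen]
        · intro i h1 h2
          have h1' : i < n := by simpa [pfx] using h1
          rw [List.getElem_take]
          simp only [pfx, List.getElem_ofFn]
          exact hget n i (by rw [hlen]; omega)
      have hpfx_small : ∀ j, j ≤ t.length → pfx v j = t.take j := by
        intro j hj
        rw [hpfx j]
        have ht : t = (playL φ t j).take t.length := by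
          rw [← List.prefix_iff_eq_take]; exact playL_prefix φ t (Nat.zero_le j)
        conv_rhs => rw [ht]
        rw [List.take_take, Nat.min_eq_left hj]
      have hpfx_big : ∀ j, t.length ≤ j → pfx v j = playL φ t (j - t.length) := by
        intro j hj
        rw [hpfx j]
        have h1 : playL φ t (j - t.length) <+: playL φ t j :=
          playL_prefix φ t (by omega)
        have h2 := List.prefix_iff_eq_take.mp h1
        rw [hlen] at h2
        have h3 : List.take j (playL φ t j) =
            List.take (t.length + (j - t.length)) (playL φ t j) := by congr 1; omega
        rw [h3]; exact h2.symm
      have hadm' : ∀ j, φ (pfx v j) ≤ v j := by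
        intro j
        rcases Nat.lt_or_ge j t.length with hj | hj
        · rw [hpfx_small j (le_of_lt hj)]
          have : v j = t[j] := by
            rw [hget 0 j (by simpa [playL])]; rfl
          rw [this]
          exact hadm j hj
        · rw [hpfx_big j hj]
          have : v j = φ (playL φ t (j - t.length)) := by
            have h1 : j < (playL φ t (j - t.length + 1)).length := by rw [hlen]; omega
            rw [hget (j - t.length + 1) j h1]
            show (playL φ t (j - t.length) ++ [_])[j] = _
            exact List.getElem_concat_length (by rw [hlen]; omega) _
          rw [this]
      -- conclude
      obtain ⟨m, hm⟩ : ∃ m, t.length = m + 1 := by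
        cases t with
        | nil => exact absurd rfl hne
        | cons a l => exact ⟨l.length, rfl⟩
      have := hφ v hadm' m
      rw [← hm, hpfx_small t.length le_rfl, List.take_length] at this
      exact this
    · -- first coordinate eventual
      rw [eventual_iff']
      refine ⟨φ [], fun u hu => ⟨by simp, ?_⟩⟩
      intro j hj
      simp only [List.length_singleton, Nat.lt_one_iff] at hj
      subst hj
      simpa using hu
    · -- successor eventual
      rintro t ⟨hne, hadm⟩ _
      rw [eventual_iff']
      refine ⟨φ t, fun u hu => ⟨by simp, ?_⟩⟩
      intro j hj
      simp only [List.length_append, List.length_singleton] at hj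
      rcases Nat.lt_or_ge j t.length with hj' | hj'
      · rw [List.take_append_of_le_length (le_of_lt hj'),
          List.getElem_append_left hj']
        exact hadm j hj'
      · have hjt : j = t.length := by omega
        subst hjt
        rw [List.take_left, List.getElem_concat_length rfl]
        exact hu
  · rintro ⟨B', hsub, hev0, hev⟩
    classical
    set T : List D → Set D := fun s => {u | s ++ [u] ∈ B'} with hT
    have hT0 : Eventual (T []) := by simpa [hT] using hev0
    set φ : List D → D := fun s =>
      if h : Eventual (T s) then Classical.choose (eventual_iff'.mp h)
      else Classical.arbitrary D with hφdef
    have hφspec : ∀ s, Eventual (T s) → ∀ u, φ s ≤ u → s ++ [u] ∈ B' := by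
      intro s hs u hu
      have : φ s = Classical.choose (eventual_iff'.mp hs) := by
        rw [hφdef]; simp [hs]
      rw [this] at hu
      exact Classical.choose_spec (eventual_iff'.mp hs) u hu
    refine ⟨φ, fun v hadm n => hsub ?_⟩
    induction n with
    | zero =>
      have := hφspec [] hT0 (v 0) (by simpa [pfx] using hadm 0)
      rw [pfx_succ]
      simpa [pfx] using this
    | succ n ih =>
      have hne : pfx v (n+1) ≠ [] := by
        intro h
        have := pfx_length v (n+1)
        rw [h] at this
        simp at this
      have hevn : Eventual (T (pfx v (n+1))) := hev _ ih hne
      have := hφspec _ hevn (v (n+1)) (hadm (n+1))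
      rw [pfx_succ]
      exact this

end Aux

/-- For a downward closed `B ⊆ D^{<ℕ}`, Player I has a winning strategy in the `B`
game if and only if `B` is big. -/
theorem winning_iff_big (B : Set (List D)) (hB : DownwardClosed B) :
    (∃ φ : List D → D, IWinning φ B) ↔ Big B := winning_iff_big' B
end

section
/- An operator A : X → Y satisfies ρ(σ, A) = 0 for every σ > 0 if and only if A is compact. -/
open Filter
open scoped Classical

/-- A net in `X`: a function to `X` from a nonempty directed preorder. -/
structure Net (X : Type*) where
  ι : Type
  pre : Preorder ι
  dir : IsDirected ι fun a b => pre.le a b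
  ne : Nonempty ι
  toFun : ι → X

/-- The `atTop` filter of the index set of a net, along which limits are taken. -/
def Net.F {X : Type*} (N : Net X) : Filter N.ι := @Filter.atTop _ N.pre

variable {X Y : Type*} [NormedAddCommGroup X] [NormedSpace ℝ X]
  [NormedAddCommGroup Y] [NormedSpace ℝ Y]

/-- A net in a normed space is weakly null if it converges to `0` in the weak topology,
i.e. `f (x_λ) → 0` for every continuous linear functional `f`. -/
def WeaklyNullNet (N : Net X) : Prop :=
  ∀ f : X →L[ℝ] ℝ, Tendsto (fun i => f (N.toFun i)) N.F (nhds 0)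

/-- The net takes values in the ball of radius `σ`. -/
def NetInBall (N : Net X) (σ : ℝ) : Prop := ∀ i, ‖N.toFun i‖ ≤ σ

/-- The modulus of asymptotic uniform smoothness of an operator `A : X → Y`:
`ρ(σ, A) = sup { limsup_λ ‖y + A x_λ‖ - 1 }` over `y ∈ B_Y` and weakly null nets
`(x_λ) ⊆ σ B_X`, with `ρ(σ, A) = 0` for the zero operator. -/
noncomputable def rho (A : X →L[ℝ] Y) (σ : ℝ) : ℝ :=
  if A = 0 then 0 else
    sSup {r : ℝ | ∃ (N : Net X) (y : Y), ‖y‖ ≤ 1 ∧ NetInBall N σ ∧ WeaklyNullNet N ∧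
      r = Filter.limsup (fun i => ‖y + A (N.toFun i)‖) N.F - 1}

/-- The index filter of a net is nontrivial. -/
lemma Net.F_neBot {X : Type*} (N : Net X) : N.F.NeBot := by
  letI := N.pre
  exact atTop_neBot_iff.mpr ⟨N.ne, N.dir⟩

/-- A compact operator maps weakly null nets of a ball to norm-null nets. -/
lemma tendsto_zero_of_isCompactOperator (A : X →L[ℝ] Y) (hA : IsCompactOperator A)
    {σ : ℝ} (N : Net X) (hball : NetInBall N σ) (hw : WeaklyNullNet N) :
    Tendsto (fun i => A (N.toFun i)) N.F (nhds 0) := by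
  haveI := N.F_neBot
  set g : N.ι → Y := fun i => A (N.toFun i) with hg
  by_contra hcon
  rw [Metric.tendsto_nhds] at hcon
  push_neg at hcon
  obtain ⟨ε, hε, hfreq⟩ := hcon
  -- the filter capturing "frequently far from 0"
  have hne : (N.F ⊓ Filter.principal {i | ε ≤ dist (g i) 0}).NeBot := by
    rwa [← Filter.frequently_iff_neBot]
  set L := N.F ⊓ Filter.principal {i | ε ≤ dist (g i) 0} with hL
  haveI : L.NeBot := hne
  set G := L.map g with hG
  haveI : G.NeBot := Filter.map_neBot
  have hK : IsCompact (closure (A '' Metric.closedBall 0 σ)) :=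
    hA.isCompact_closure_image_closedBall (𝕜₁ := ℝ) σ
  have hGK : G ≤ Filter.principal (closure (A '' Metric.closedBall 0 σ)) := by
    rw [Filter.le_principal_iff, Filter.mem_map]
    refine Filter.univ_mem' fun i => ?_
    exact subset_closure ⟨N.toFun i, by
      simpa [Metric.mem_closedBall, dist_eq_norm] using hball i, rfl⟩
  obtain ⟨z, _, hz⟩ := hK.exists_clusterPt hGK
  -- `z` has norm at least `ε`
  have hznorm : ε ≤ ‖z‖ := by
    have hGs : G ≤ Filter.principal {w : Y | ε ≤ ‖w‖} := by
      rw [Filter.le_principal_iff, Filter.mem_map]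
      refine Filter.mem_inf_of_right ?_
      refine Filter.mem_principal.mpr fun i hi => ?_
      simpa [dist_eq_norm] using hi
    have hcl : z ∈ closure {w : Y | ε ≤ ‖w‖} :=
      mem_closure_iff_clusterPt.mpr (hz.mono hGs)
    have hclosed : IsClosed {w : Y | ε ≤ ‖w‖} :=
      isClosed_le continuous_const continuous_norm
    rw [hclosed.closure_eq] at hcl
    exact hcl
  have hz0 : z ≠ 0 := by
    intro h
    rw [h, norm_zero] at hznorm
    linarith
  obtain ⟨f, _, hfz⟩ := exists_dual_vector ℝ z (norm_ne_zero_iff.mpr hz0)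
  -- the net is weakly null, so `f ∘ g → 0`, but `f z` is a cluster value
  have htend : Tendsto (fun w => f w) G (nhds 0) := by
    rw [hG, Filter.tendsto_map'_iff]
    have := hw (f.comp A)
    simp only [ContinuousLinearMap.comp_apply] at this
    exact this.mono_left inf_le_left
  have hclu : ClusterPt (f z) (nhds (0 : ℝ)) :=
    (hz.map f.continuous.continuousAt htend)
  have : (f z : ℝ) = 0 := eq_of_nhds_neBot hclu
  rw [hfz] at this
  simp only [RCLike.ofReal_real_eq_id, id_eq] at this
  rw [this] at hznorm
  linarith

/-- An operator `A : X → Y` satisfies `ρ(σ, A) = 0` for every `σ > 0` if and only if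
`A` is a compact operator. -/
theorem rho_eq_zero_iff_isCompactOperator [CompleteSpace X] [CompleteSpace Y]
    (A : X →L[ℝ] Y) :
    (∀ σ : ℝ, 0 < σ → rho A σ = 0) ↔ IsCompactOperator A := by
  constructor
  · -- ρ = 0 everywhere ⟹ compact
    intro h
    by_contra hnc
    have hA0 : A ≠ 0 := by
      rintro rfl
      exact hnc (by simpa using isCompactOperator_zero)
    -- the image of the unit ball is not totally bounded
    have htb : ¬ TotallyBounded (A '' Metric.closedBall 0 1) := by
      intro htb
      have hcl : IsCompact (closure (A '' Metric.closedBall 0 1)) :=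
        TotallyBounded.isCompact_of_isClosed (totallyBounded_closure.mpr htb) isClosed_closure
      exact hnc ((isCompactOperator_iff_isCompact_closure_image_closedBall
        (𝕜₁ := ℝ) (A : X →ₛₗ[RingHom.id ℝ] Y) one_pos).mpr hcl)
    rw [Metric.totallyBounded_iff] at htb
    push_neg at htb
    obtain ⟨ε, hε, hsep⟩ := htb
    -- choose an ε-separated sequence in the image of the ball
    have hpick : ∀ t : Finset Y, ∃ x : X, ‖x‖ ≤ 1 ∧ ∀ y ∈ t, ε ≤ dist (A x) y := by
      intro t
      have h1 := hsep ↑t t.finite_toSet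
      rw [Set.not_subset] at h1
      obtain ⟨z, hz1, hz2⟩ := h1
      obtain ⟨x, hx, rfl⟩ := hz1
      refine ⟨x, by simpa [Metric.mem_closedBall, dist_eq_norm] using hx, fun y hy => ?_⟩
      by_contra hlt
      push_neg at hlt
      exact hz2 (Set.mem_biUnion hy (Metric.mem_ball.mpr hlt))
    choose g hg1 hg2 using hpick
    set v : ℕ → Finset Y := fun n => Nat.rec ∅ (fun _ t => insert (A (g t)) t) n with hv
    have hvsucc : ∀ n, v (n + 1) = insert (A (g (v n))) (v n) := fun n => rfl
    have hvmono : ∀ m n, m ≤ n → v m ⊆ v n := by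
      intro m n hmn
      induction n with
      | zero => simp_all
      | succ k ih =>
        rcases Nat.lt_or_ge m (k+1) with hlt | hge
        · exact (ih (Nat.lt_succ_iff.mp hlt)).trans
            (by rw [hvsucc]; exact Finset.subset_insert _ _)
        · have : m = k + 1 := le_antisymm hmn hge
          subst this; exact subset_rfl
    set u : ℕ → X := fun n => g (v n) with hu
    have hunorm : ∀ n, ‖u n‖ ≤ 1 := fun n => hg1 (v n)
    have husep : ∀ m n, m < n → ε ≤ dist (A (u n)) (A (u m)) := by
      intro m n hmn
      refine hg2 (v n) (A (u m)) ?_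
      have : A (u m) ∈ v (m + 1) := by rw [hvsucc]; exact Finset.mem_insert_self _ _
      exact hvmono (m+1) n hmn this
    have husep' : ∀ m n, m ≠ n → ε ≤ ‖A (u m) - A (u n)‖ := by
      intro m n hmn
      rcases lt_or_gt_of_ne hmn with hlt | hgt
      · rw [← dist_eq_norm, dist_comm]; exact husep m n hlt
      · rw [← dist_eq_norm]; exact husep n m hgt
    -- a free ultrafilter on ℕ
    set U := Ultrafilter.of (atTop : Filter ℕ) with hU
    have hUle : (U : Filter ℕ) ≤ atTop := Ultrafilter.of_le _
    have hinf : ∀ S ∈ U, S.Infinite := by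
      intro S hS
      by_contra hfin
      rw [Set.not_infinite] at hfin
      have h1 : Sᶜ ∈ (atTop : Filter ℕ) := by
        rw [← Nat.cofinite_eq_atTop]
        simpa using hfin
      have h2 : Sᶜ ∈ U := hUle h1
      exact (Ultrafilter.compl_mem_iff_notMem.mp h2) hS
    set σ : ℝ := 6 / ε with hσdef
    have hσ : 0 < σ := by positivity
    -- the index preorder
    letI ι : Type := {p : (ℕ × ℕ) × Set ℕ // p.1.1 ∈ p.2 ∧ p.1.2 ∈ p.2 ∧ p.1.1 ≠ p.1.2 ∧ p.2 ∈ U}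
    letI pre : Preorder ι :=
      { le := fun p q => q.val.2 ⊆ p.val.2
        lt := fun p q => q.val.2 ⊆ p.val.2 ∧ ¬ p.val.2 ⊆ q.val.2
        le_refl := fun p => subset_rfl
        le_trans := fun p q r h1 h2 => Set.Subset.trans h2 h1
        lt_iff_le_not_ge := fun p q => Iff.rfl }
    have hdir : IsDirected ι fun a b => pre.le a b := by
      constructor
      intro p q
      have hS : p.val.2 ∩ q.val.2 ∈ U := Filter.inter_mem p.2.2.2.2 q.2.2.2.2
      obtain ⟨a, ha, b, hb, hab⟩ := (hinf _ hS).nontrivial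
      exact ⟨⟨((a, b), p.val.2 ∩ q.val.2), ha, hb, hab, hS⟩,
        Set.inter_subset_left, Set.inter_subset_right⟩
    have hιne : Nonempty ι := by
      have hS : (Set.univ : Set ℕ) ∈ U := Filter.univ_mem
      obtain ⟨a, ha, b, hb, hab⟩ := (hinf _ hS).nontrivial
      exact ⟨⟨((a, b), Set.univ), ha, hb, hab, hS⟩⟩
    set N : Net X := ⟨ι, pre, hdir, hιne, fun p => (σ / 2) • (u p.val.1.1 - u p.val.1.2)⟩
      with hN
    haveI := N.F_neBot
    have hball : NetInBall N σ := by
      intro p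
      have h1 : ‖u p.val.1.1 - u p.val.1.2‖ ≤ 2 := by
        calc ‖u p.val.1.1 - u p.val.1.2‖ ≤ ‖u p.val.1.1‖ + ‖u p.val.1.2‖ := norm_sub_le _ _
        _ ≤ 2 := by have := hunorm p.val.1.1; have := hunorm p.val.1.2; linarith
      calc ‖(σ / 2) • (u p.val.1.1 - u p.val.1.2)‖
          = (σ / 2) * ‖u p.val.1.1 - u p.val.1.2‖ := by
            rw [norm_smul, Real.norm_eq_abs, abs_of_pos (by positivity)]
        _ ≤ (σ / 2) * 2 := by nlinarith
        _ = σ := by ring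
    have hweak : WeaklyNullNet N := by
      intro f
      -- the bounded sequence f ∘ u has an ultrafilter limit
      have hbd : ∀ n, f (u n) ∈ Set.Icc (-‖f‖) ‖f‖ := by
        intro n
        have h1 : ‖f (u n)‖ ≤ ‖f‖ * ‖u n‖ := f.le_opNorm _
        have h2 : ‖f‖ * ‖u n‖ ≤ ‖f‖ := by
          have := hunorm n
          nlinarith [norm_nonneg f]
        rw [Real.norm_eq_abs, abs_le] at h1
        constructor <;> nlinarith
      have hle : (U.map (fun n => f (u n)) : Filter ℝ) ≤
          Filter.principal (Set.Icc (-‖f‖) ‖f‖) := by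
        rw [Filter.le_principal_iff]
        exact Filter.mem_map.mpr (Filter.univ_mem' hbd)
      obtain ⟨Lim, _, hLim⟩ := isCompact_Icc.ultrafilter_le_nhds (U.map fun n => f (u n)) hle
      have hLim' : Tendsto (fun n => f (u n)) (U : Filter ℕ) (nhds Lim) := hLim
      rw [NormedAddCommGroup.tendsto_nhds_zero]
      intro δ hδ
      set δ' : ℝ := δ / (σ + 1) with hδ'def
      have hδ' : 0 < δ' := by positivity
      set S₀ : Set ℕ := (fun n => f (u n)) ⁻¹' Metric.ball Lim δ' with hS₀def
      have hS₀ : S₀ ∈ U := hLim' (Metric.ball_mem_nhds _ hδ')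
      obtain ⟨a, ha, b, hb, hab⟩ := (hinf _ hS₀).nontrivial
      have hIci : Set.Ici (⟨((a, b), S₀), ha, hb, hab, hS₀⟩ : ι) ∈ N.F := Ici_mem_atTop _
      filter_upwards [hIci] with p hp
      have hpa : p.val.1.1 ∈ S₀ := hp p.2.1
      have hpb : p.val.1.2 ∈ S₀ := hp p.2.2.1
      rw [hS₀def, Set.mem_preimage, Metric.mem_ball, Real.dist_eq] at hpa hpb
      have hval : f (N.toFun p) = (σ / 2) * (f (u p.val.1.1) - f (u p.val.1.2)) := by
        simp [show N.toFun p = (σ / 2) • (u p.val.1.1 - u p.val.1.2) from rfl, map_smul, map_sub, smul_eq_mul]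
      rw [hval, Real.norm_eq_abs]
      have htri : |f (u p.val.1.1) - f (u p.val.1.2)| ≤
          |f (u p.val.1.1) - Lim| + |f (u p.val.1.2) - Lim| := by
        have : f (u p.val.1.1) - f (u p.val.1.2) =
            (f (u p.val.1.1) - Lim) - (f (u p.val.1.2) - Lim) := by ring
        rw [this]
        exact abs_sub _ _
      rw [abs_mul, abs_of_pos (show (0:ℝ) < σ / 2 by positivity)]
      have hbound : (σ / 2) * |f (u p.val.1.1) - f (u p.val.1.2)| < σ * δ' := by
        nlinarith
      have hfinal : σ * δ' < δ := by
        rw [hδ'def]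
        calc σ * (δ / (σ + 1)) = (σ * δ) / (σ + 1) := by ring
          _ < δ := by
            rw [div_lt_iff₀ (by positivity : (0:ℝ) < σ + 1)]
            nlinarith
      linarith
    -- the norm of A on the net is bounded below by 3
    have hlow : ∀ p : N.ι, 3 ≤ ‖(0 : Y) + A (N.toFun p)‖ := by
      intro p
      have hne' : p.val.1.1 ≠ p.val.1.2 := p.2.2.2.1
      have h1 : ε ≤ ‖A (u p.val.1.1) - A (u p.val.1.2)‖ := husep' _ _ hne'
      have hval : A (N.toFun p) = (σ / 2) • (A (u p.val.1.1) - A (u p.val.1.2)) := by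
        simp [show N.toFun p = (σ / 2) • (u p.val.1.1 - u p.val.1.2) from rfl, map_smul, map_sub]
      rw [zero_add, hval, norm_smul, Real.norm_eq_abs,
        abs_of_pos (show (0:ℝ) < σ / 2 by positivity)]
      have : σ / 2 * ε = 3 := by
        rw [hσdef]; field_simp; ring
      nlinarith [norm_nonneg (A (u p.val.1.1) - A (u p.val.1.2))]
    have hbddA : ∀ p : N.ι, ‖(0 : Y) + A (N.toFun p)‖ ≤ ‖A‖ * σ := by
      intro p
      rw [zero_add]
      calc ‖A (N.toFun p)‖ ≤ ‖A‖ * ‖N.toFun p‖ := A.le_opNorm _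
        _ ≤ ‖A‖ * σ := by nlinarith [hball p, norm_nonneg A, norm_nonneg (N.toFun p)]
    have hbdd : N.F.IsBoundedUnder (· ≤ ·) (fun p => ‖(0 : Y) + A (N.toFun p)‖) :=
      Filter.isBoundedUnder_of ⟨‖A‖ * σ, hbddA⟩
    have hlimsup : 3 ≤ Filter.limsup (fun p => ‖(0 : Y) + A (N.toFun p)‖) N.F :=
      Filter.le_limsup_of_frequently_le (Filter.Frequently.of_forall hlow) hbdd
    -- membership in the sup set
    set SS := {r : ℝ | ∃ (N' : Net X) (y : Y), ‖y‖ ≤ 1 ∧ NetInBall N' σ ∧ WeaklyNullNet N' ∧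
      r = Filter.limsup (fun i => ‖y + A (N'.toFun i)‖) N'.F - 1} with hSS
    have hmem : Filter.limsup (fun p => ‖(0 : Y) + A (N.toFun p)‖) N.F - 1 ∈ SS :=
      ⟨N, 0, by simp, hball, hweak, rfl⟩
    have hub : ∀ r ∈ SS, r ≤ ‖A‖ * σ := by
      rintro r ⟨N', y, hy, hball', _, rfl⟩
      haveI := N'.F_neBot
      have hcb : N'.F.IsCoboundedUnder (· ≤ ·) (fun i => ‖y + A (N'.toFun i)‖) := by
        refine Filter.IsBoundedUnder.isCoboundedUnder_le ?_
        exact Filter.isBoundedUnder_of ⟨0, fun i => norm_nonneg _⟩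
      have hev : ∀ i, ‖y + A (N'.toFun i)‖ ≤ 1 + ‖A‖ * σ := by
        intro i
        calc ‖y + A (N'.toFun i)‖ ≤ ‖y‖ + ‖A (N'.toFun i)‖ := norm_add_le _ _
          _ ≤ 1 + ‖A‖ * σ := by
              have h1 : ‖A (N'.toFun i)‖ ≤ ‖A‖ * ‖N'.toFun i‖ := A.le_opNorm _
              have h2 : ‖A‖ * ‖N'.toFun i‖ ≤ ‖A‖ * σ := by
                nlinarith [hball' i, norm_nonneg A, norm_nonneg (N'.toFun i)]
              linarith
      have := Filter.limsup_le_of_le hcb (Filter.Eventually.of_forall hev)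
      linarith
    have hrho : rho A σ = 0 := h σ hσ
    rw [rho, if_neg hA0] at hrho
    have hle2 : (2 : ℝ) ≤ sSup SS := by
      have h1 : (2 : ℝ) ≤ Filter.limsup (fun p => ‖(0 : Y) + A (N.toFun p)‖) N.F - 1 := by
        linarith
      exact h1.trans (le_csSup ⟨‖A‖ * σ, fun r hr => hub r hr⟩ hmem)
    rw [hSS] at hle2
    rw [hrho] at hle2
    linarith
  · -- compact ⟹ ρ = 0
    intro hA σ hσ
    rw [rho]
    by_cases hA0 : A = 0
    · rw [if_pos hA0]
    · rw [if_neg hA0]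
      set SS := {r : ℝ | ∃ (N : Net X) (y : Y), ‖y‖ ≤ 1 ∧ NetInBall N σ ∧ WeaklyNullNet N ∧
        r = Filter.limsup (fun i => ‖y + A (N.toFun i)‖) N.F - 1} with hSS
      -- every element of SS is ≤ 0
      have hub : ∀ r ∈ SS, r ≤ 0 := by
        rintro r ⟨N, y, hy, hball, hw, rfl⟩
        haveI := N.F_neBot
        have hkey : Tendsto (fun i => A (N.toFun i)) N.F (nhds 0) :=
          tendsto_zero_of_isCompactOperator A hA N hball hw
        have htendnorm : Tendsto (fun i => ‖y + A (N.toFun i)‖) N.F (nhds ‖y‖) := by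
          have hc : Continuous (fun w : Y => ‖y + w‖) :=
            continuous_norm.comp (continuous_const.add continuous_id)
          have := (hc.tendsto 0).comp hkey
          simpa [Function.comp_def] using this
        rw [htendnorm.limsup_eq]
        linarith
      -- 0 belongs to SS, using a unit vector of Y and the constant-zero net
      have hx : ∃ x : X, A x ≠ 0 := by
        by_contra hcon
        push_neg at hcon
        exact hA0 (ContinuousLinearMap.ext fun x => by simp [hcon x])
      obtain ⟨x, hx⟩ := hx
      set y : Y := ‖A x‖⁻¹ • A x with hy
      have hynorm : ‖y‖ = 1 := by
        rw [hy, norm_smul, norm_inv, norm_norm,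
          inv_mul_cancel₀ (norm_ne_zero_iff.mpr hx)]
      set N₀ : Net X := ⟨Unit, inferInstance, ⟨fun a _ => ⟨a, le_refl a, le_refl a⟩⟩,
        ⟨()⟩, fun _ => 0⟩ with hN₀
      haveI := N₀.F_neBot
      have h0mem : (0 : ℝ) ∈ SS := by
        refine ⟨N₀, y, le_of_eq hynorm, fun i => by simp [show ∀ i, N₀.toFun i = 0 from fun _ => rfl]; positivity, ?_, ?_⟩
        · intro f
          simp only [show ∀ i, N₀.toFun i = 0 from fun _ => rfl, map_zero]
          exact tendsto_const_nhds
        · have : (fun i : N₀.ι => ‖y + A (N₀.toFun i)‖) = fun _ => ‖y‖ := by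
            funext i
            simp [show ∀ i, N₀.toFun i = 0 from fun _ => rfl]
          rw [this, Filter.limsup_const, hynorm]
          ring
      exact le_antisymm (Real.sSup_le hub le_rfl) (le_csSup ⟨0, hub⟩ h0mem)
end
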